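/- Let {H_iα_i}_{i=1}^s be a coset partition of F_n (n ≥ 2) with indices d_i > 1 and Schreier-graph periods h_i. Suppose exactly one value h > 1 occurs among the periods, with r repetitions, and h < r ≤ 2(h−1). Then the partition has multiplicity: there exist j ≠ k with d_j = d_k. -/

import Mathlib

open Finset Filter Topology

namespace UPM

variable {n D : ℕ}

/-- Action of a word (list of generators) on the Schreier graph vertices. -/
def Tw (σ : Fin n → Equiv.Perm (Fin D)) (w : List (Fin n)) (p : Fin D) : Fin D :=
  w.foldl (fun x a => σ a x) p

@[simp] lemma Tw_nil (σ : Fin n → Equiv.Perm (Fin D)) (p : Fin D) : Tw σ [] p = p := rfl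

@[simp] lemma Tw_cons (σ : Fin n → Equiv.Perm (Fin D)) (a : Fin n) (w : List (Fin n)) (p : Fin D) :
    Tw σ (a :: w) p = Tw σ w (σ a p) := rfl

lemma Tw_append (σ : Fin n → Equiv.Perm (Fin D)) (w₁ w₂ : List (Fin n)) (p : Fin D) :
    Tw σ (w₁ ++ w₂) p = Tw σ w₂ (Tw σ w₁ p) :=
  List.foldl_append

lemma Tw_replicate (σ : Fin n → Equiv.Perm (Fin D)) (m : ℕ) (a : Fin n) (p : Fin D) :
    Tw σ (List.replicate m a) p = (σ a ^ m) p := by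
  induction m generalizing p with
  | zero => simp
  | succ m ih =>
      rw [List.replicate_succ, Tw_cons, ih, pow_succ]
      simp [Equiv.Perm.mul_apply]

/-- Matrix powers count words realizing a given transition. -/
lemma count_pow (σ : Fin n → Equiv.Perm (Fin D)) (A : Matrix (Fin D) (Fin D) ℕ)
    (hA : ∀ p q, A p q = (univ.filter fun a : Fin n => σ a p = q).card)
    (m : ℕ) (p q : Fin D) :
    (A ^ m) p q = (univ.filter fun w : Fin m → Fin n => Tw σ (List.ofFn w) p = q).card := by
  induction m generalizing p with
  | zero =>
      simp only [pow_zero, Matrix.one_apply]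
      rcases eq_or_ne p q with rfl | hpq
      · rw [if_pos rfl]
        have : (univ.filter fun w : Fin 0 → Fin n => Tw σ (List.ofFn w) p = p) = univ := by
          apply Finset.filter_true_of_mem
          intro w _
          simp [List.ofFn_zero]
        rw [this]
        simp
      · rw [if_neg hpq]
        symm
        rw [Finset.card_eq_zero, Finset.filter_eq_empty_iff]
        intro w _
        simp [List.ofFn_zero, hpq]
  | succ m ih =>
      rw [pow_succ']
      have lhs : (A * A ^ m) p q = ∑ a : Fin n, (A ^ m) (σ a p) q := by
        rw [Matrix.mul_apply]
        have : ∀ k, A p k * (A ^ m) k q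
            = ∑ a : Fin n, if σ a p = k then (A ^ m) k q else 0 := by
          intro k
          rw [hA, Finset.card_filter, Finset.sum_mul]
          exact Finset.sum_congr rfl fun a _ => by split <;> simp
        rw [Finset.sum_congr rfl fun k _ => this k, Finset.sum_comm]
        exact Finset.sum_congr rfl fun a _ => by simp
      rw [lhs]
      have rhs : (univ.filter fun w : Fin (m+1) → Fin n => Tw σ (List.ofFn w) p = q).card
          = ∑ a : Fin n,
            (univ.filter fun w : Fin m → Fin n => Tw σ (List.ofFn w) (σ a p) = q).card := by
        rw [Finset.card_filter]
        rw [← Fintype.sum_equiv (Fin.consEquiv fun _ => Fin n)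
          (fun aw => if Tw σ (List.ofFn (Fin.cons aw.1 aw.2)) p = q then 1 else 0)
          (fun w => if Tw σ (List.ofFn w) p = q then 1 else 0) (fun aw => rfl)]
        rw [Fintype.sum_prod_type]
        refine Finset.sum_congr rfl fun a _ => ?_
        rw [Finset.card_filter]
        refine Finset.sum_congr rfl fun w _ => ?_
        have : List.ofFn (Fin.cons a w : Fin (m+1) → Fin n) = a :: List.ofFn w := by
          rw [List.ofFn_succ]
          simp
        rw [this, Tw_cons]
      rw [rhs]
      exact Finset.sum_congr rfl fun a _ => ih (σ a p)

lemma pow_pos_iff (σ : Fin n → Equiv.Perm (Fin D)) (A : Matrix (Fin D) (Fin D) ℕ)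
    (hA : ∀ p q, A p q = (univ.filter fun a : Fin n => σ a p = q).card)
    (m : ℕ) (p q : Fin D) :
    0 < (A ^ m) p q ↔ ∃ w : List (Fin n), w.length = m ∧ Tw σ w p = q := by
  rw [count_pow σ A hA, Finset.card_pos]
  constructor
  · rintro ⟨w, hw⟩
    simp only [Finset.mem_filter, Finset.mem_univ, true_and] at hw
    exact ⟨List.ofFn w, List.length_ofFn, hw⟩
  · rintro ⟨w, hlen, hw⟩
    subst hlen
    refine ⟨w.get, ?_⟩
    simp only [Finset.mem_filter, Finset.mem_univ, true_and, List.ofFn_get]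
    exact hw

lemma exists_return (hn : 0 < n) (σ : Fin n → Equiv.Perm (Fin D)) (v0 : Fin D) :
    ∃ m, 0 < m ∧ ∃ w : List (Fin n), w.length = m ∧ Tw σ w v0 = v0 := by
  set a : Fin n := ⟨0, hn⟩
  refine ⟨orderOf (σ a), orderOf_pos _, List.replicate (orderOf (σ a)) a, by simp, ?_⟩
  rw [Tw_replicate, pow_orderOf_eq_one]
  rfl

lemma pow_eq_pow_of_dvd_sub {μ : ℂ} {P a b : ℕ} (hμP : μ ^ P = 1)
    (hd : (P : ℤ) ∣ (a : ℤ) - (b : ℤ)) : μ ^ a = μ ^ b := by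
  have key : ∀ a b : ℕ, b ≤ a → ((P : ℤ) ∣ (a : ℤ) - (b : ℤ)) → μ ^ a = μ ^ b := by
    intro a b hba hd
    obtain ⟨k, hk⟩ := Int.natCast_dvd_natCast.mp (by
      rwa [← Nat.cast_sub hba] at hd : ((P : ℤ)) ∣ ((a - b : ℕ) : ℤ))
    have : a = b + P * k := by omega
    rw [this, pow_add, pow_mul, hμP, one_pow, mul_one]
  rcases le_total b a with hab | hab
  · exact key a b hab hd
  · exact (key b a hab (by rw [← neg_sub]; exact dvd_neg.mpr hd)).symm

/-! ### The transfer operator -/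

noncomputable def Bop (σ : Fin n → Equiv.Perm (Fin D)) :
    EuclideanSpace ℂ (Fin D) →L[ℂ] EuclideanSpace ℂ (Fin D) :=
  LinearMap.toContinuousLinearMap
    { toFun := fun x => (WithLp.toLp 2 (fun p => (n : ℂ)⁻¹ * ∑ a : Fin n, x (σ a p)) : EuclideanSpace ℂ (Fin D))
      map_add' := by
        intro x y
        ext p
        show (n : ℂ)⁻¹ * ∑ a : Fin n, (x + y) (σ a p) = _
        have : ∀ a : Fin n, (x + y) (σ a p) = x (σ a p) + y (σ a p) := fun a => rfl
        simp only [this, Finset.sum_add_distrib, mul_add]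
        rfl
      map_smul' := by
        intro c x
        ext p
        show (n : ℂ)⁻¹ * ∑ a : Fin n, (c • x) (σ a p) = _
        have : ∀ a : Fin n, (c • x) (σ a p) = c * x (σ a p) := fun a => rfl
        simp only [this, ← Finset.mul_sum, RingHom.id_apply]
        show _ = c * ((n : ℂ)⁻¹ * ∑ a : Fin n, x (σ a p))
        ring }

lemma Bop_apply (σ : Fin n → Equiv.Perm (Fin D)) (x : EuclideanSpace ℂ (Fin D)) (p : Fin D) :
    Bop σ x p = (n : ℂ)⁻¹ * ∑ a : Fin n, x (σ a p) := by
  simp [Bop]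

lemma euclid_sum_apply {ι : Type*} (s : Finset ι) (f : ι → EuclideanSpace ℂ (Fin D)) (p : Fin D) :
    (∑ a ∈ s, f a) p = ∑ a ∈ s, f a p := by
  induction s using Finset.cons_induction with
  | empty => rfl
  | cons a s ha ih => rw [Finset.sum_cons, Finset.sum_cons, ← ih]; rfl

/-- Precomposition with a permutation as an element of Euclidean space. -/
def permComp (e : Equiv.Perm (Fin D)) (x : EuclideanSpace ℂ (Fin D)) :
    EuclideanSpace ℂ (Fin D) := WithLp.toLp 2 (fun p => x (e p))

lemma norm_permComp (e : Equiv.Perm (Fin D)) (x : EuclideanSpace ℂ (Fin D)) :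
    ‖permComp e x‖ = ‖x‖ := by
  rw [EuclideanSpace.norm_eq, EuclideanSpace.norm_eq]
  congr 1
  exact Equiv.sum_comp e (fun q => ‖x q‖ ^ 2)

lemma Bop_eq_smul_sum (σ : Fin n → Equiv.Perm (Fin D)) (x : EuclideanSpace ℂ (Fin D)) :
    Bop σ x = (n : ℂ)⁻¹ • ∑ a : Fin n, permComp (σ a) x := by
  ext p
  rw [Bop_apply]
  show _ = (n : ℂ)⁻¹ * (∑ a : Fin n, permComp (σ a) x) p
  rw [euclid_sum_apply]
  rfl

lemma norm_Bop_apply_le (σ : Fin n → Equiv.Perm (Fin D)) (x : EuclideanSpace ℂ (Fin D)) :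
    ‖Bop σ x‖ ≤ ‖x‖ := by
  rcases Nat.eq_zero_or_pos n with hn | hn
  · subst hn
    have : Bop σ x = 0 := by
      ext p
      rw [Bop_apply]
      simp
    rw [this]
    simp
  rw [Bop_eq_smul_sum, norm_smul]
  have h1 : ‖∑ a : Fin n, permComp (σ a) x‖ ≤ (n : ℝ) * ‖x‖ := by
    calc ‖∑ a : Fin n, permComp (σ a) x‖ ≤ ∑ a : Fin n, ‖permComp (σ a) x‖ :=
          norm_sum_le _ _
    _ = (n : ℝ) * ‖x‖ := by simp [norm_permComp, mul_comm]
  have h2 : ‖(n : ℂ)⁻¹‖ = (n : ℝ)⁻¹ := by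
    rw [norm_inv, Complex.norm_natCast]
  rw [h2]
  calc (n : ℝ)⁻¹ * ‖∑ a : Fin n, permComp (σ a) x‖ ≤ (n : ℝ)⁻¹ * ((n : ℝ) * ‖x‖) := by
        apply mul_le_mul_of_nonneg_left h1 (by positivity)
  _ = ‖x‖ := by
        field_simp

lemma norm_smul_Bop_le (σ : Fin n → Equiv.Perm (Fin D)) {μ : ℂ} (hμ : ‖μ‖ = 1) :
    ‖μ • Bop σ‖ ≤ 1 := by
  apply ContinuousLinearMap.opNorm_le_bound _ zero_le_one
  intro x
  rw [ContinuousLinearMap.smul_apply, norm_smul, hμ, one_mul, one_mul]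
  exact norm_Bop_apply_le σ x

lemma Bop_iter (σ : Fin n → Equiv.Perm (Fin D)) (m : ℕ) (x : EuclideanSpace ℂ (Fin D))
    (p : Fin D) :
    (⇑(Bop σ))^[m] x p = ((n : ℂ)⁻¹) ^ m * ∑ w : Fin m → Fin n, x (Tw σ (List.ofFn w) p) := by
  induction m generalizing p with
  | zero =>
      simp only [Function.iterate_zero, id_eq, pow_zero, one_mul]
      have h0 : ∀ w : Fin 0 → Fin n, x (Tw σ (List.ofFn w) p) = x p := by
        intro w
        rw [List.ofFn_zero, Tw_nil]
      rw [Finset.sum_congr rfl fun w _ => h0 w, Finset.sum_const]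
      have : Fintype.card (Fin 0 → Fin n) = 1 := by simp
      rw [Finset.card_univ, this, one_smul]
  | succ m ih =>
      rw [Function.iterate_succ_apply']
      rw [Bop_apply]
      have : ∀ a : Fin n, (⇑(Bop σ))^[m] x (σ a p)
          = ((n : ℂ)⁻¹) ^ m * ∑ w : Fin m → Fin n, x (Tw σ (List.ofFn w) (σ a p)) :=
        fun a => ih (σ a p)
      simp only [this]
      rw [← Finset.mul_sum]
      have : ∑ w : Fin (m+1) → Fin n, x (Tw σ (List.ofFn w) p)
          = ∑ a : Fin n, ∑ w : Fin m → Fin n, x (Tw σ (List.ofFn w) (σ a p)) := by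
        rw [← Fintype.sum_equiv (Fin.consEquiv fun _ => Fin n)
          (fun aw => x (Tw σ (List.ofFn (Fin.cons aw.1 aw.2)) p))
          (fun w => x (Tw σ (List.ofFn w) p)) (fun aw => rfl)]
        rw [Fintype.sum_prod_type]
        refine Finset.sum_congr rfl fun a _ => Finset.sum_congr rfl fun w _ => ?_
        have : List.ofFn (Fin.cons a w : Fin (m+1) → Fin n) = a :: List.ofFn w := by
          rw [List.ofFn_succ]; simp
        rw [this, Tw_cons]
      rw [this]
      ring

lemma Bop_iter_single (σ : Fin n → Equiv.Perm (Fin D)) (A : Matrix (Fin D) (Fin D) ℕ)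
    (hA : ∀ p q, A p q = (univ.filter fun a : Fin n => σ a p = q).card)
    (m : ℕ) (p q : Fin D) :
    (⇑(Bop σ))^[m] (EuclideanSpace.single q 1) p = ((A ^ m) p q : ℂ) / (n : ℂ) ^ m := by
  rw [Bop_iter, count_pow σ A hA]
  have : ∀ w : Fin m → Fin n, (EuclideanSpace.single q (1:ℂ)) (Tw σ (List.ofFn w) p)
      = if Tw σ (List.ofFn w) p = q then 1 else 0 := by
    intro w
    rw [EuclideanSpace.single_apply]
  simp only [this]
  rw [Finset.sum_boole]
  rw [div_eq_mul_inv, ← inv_pow, mul_comm]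

/-! ### Rigidity of fixed vectors -/

local notation "⟪" x ", " y "⟫" => @inner ℂ _ _ x y

lemma fixed_pointwise (σ : Fin n → Equiv.Perm (Fin D)) (hn : 0 < n) {μ : ℂ} (hμ : ‖μ‖ = 1)
    {x : EuclideanSpace ℂ (Fin D)} (hx : μ • (Bop σ x) = x) (a : Fin n) (p : Fin D) :
    x (σ a p) = μ⁻¹ * x p := by
  have hμ0 : μ ≠ 0 := by intro hc; rw [hc] at hμ; simp at hμ
  have hn0 : (n : ℂ) ≠ 0 := Nat.cast_ne_zero.mpr hn.ne'
  set z : EuclideanSpace ℂ (Fin D) := μ⁻¹ • x with hz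
  have hznorm : ‖z‖ = ‖x‖ := by
    rw [hz, norm_smul, norm_inv, hμ]
    norm_num
  have hsum : ∑ b : Fin n, permComp (σ b) x = (n : ℂ) • z := by
    ext q
    rw [euclid_sum_apply]
    have h1 : μ * ((n:ℂ)⁻¹ * ∑ b : Fin n, x (σ b q)) = x q := by
      have h0 := congrFun (congrArg WithLp.ofLp hx) q
      have h0' : (μ • Bop σ x) q = μ * (Bop σ x q) := rfl
      rw [h0', Bop_apply] at h0
      exact h0
    show ∑ b : Fin n, x (σ b q) = ((n:ℂ) • z) q
    have h2 : ((n:ℂ) • z) q = (n:ℂ) * (μ⁻¹ * x q) := rfl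
    rw [h2]
    have : ∀ b : Fin n, permComp (σ b) x q = x (σ b q) := fun b => rfl
    field_simp at h1 ⊢
    linear_combination h1
  have hbnorm : ∀ b : Fin n, ‖permComp (σ b) x‖ = ‖z‖ := by
    intro b
    rw [norm_permComp, hznorm]
  have hsum2 : ∑ b : Fin n, RCLike.re (K := ℂ) ⟪permComp (σ b) x, z⟫ = n * ‖z‖ ^ 2 := by
    have h4 : (∑ b : Fin n, ⟪permComp (σ b) x, z⟫) = ⟪∑ b : Fin n, permComp (σ b) x, z⟫ :=
      (sum_inner _ _ _).symm
    have h5 : ∑ b : Fin n, RCLike.re (K := ℂ) ⟪permComp (σ b) x, z⟫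
        = RCLike.re (K := ℂ) ⟪∑ b : Fin n, permComp (σ b) x, z⟫ := by
      rw [← h4]
      exact (map_sum _ _ _).symm
    rw [h5, hsum, inner_smul_left, Complex.conj_natCast]
    have h6 : ⟪z, z⟫ = ((‖z‖ : ℂ)) ^ 2 := inner_self_eq_norm_sq_to_K z
    rw [h6]
    have h7 : (n : ℂ) * ((‖z‖ : ℂ)) ^ 2 = (((n * ‖z‖ ^ 2 : ℝ)) : ℂ) := by push_cast; ring
    rw [h7]
    simp
    left
    rw [← Complex.ofReal_pow]
    exact Complex.ofReal_re _
  have heach : ∀ b : Fin n, RCLike.re (K := ℂ) ⟪permComp (σ b) x, z⟫ = ‖z‖ ^ 2 := by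
    by_contra hcon
    push_neg at hcon
    obtain ⟨b₀, hb₀⟩ := hcon
    have hlt : RCLike.re (K := ℂ) ⟪permComp (σ b₀) x, z⟫ < ‖z‖ ^ 2 :=
      lt_of_le_of_ne (by
        calc RCLike.re (K := ℂ) ⟪permComp (σ b₀) x, z⟫ ≤ ‖permComp (σ b₀) x‖ * ‖z‖ :=
              re_inner_le_norm _ _
        _ = ‖z‖ ^ 2 := by rw [hbnorm]; ring) hb₀
    have hle : ∀ b : Fin n, b ∈ univ → RCLike.re (K := ℂ) ⟪permComp (σ b) x, z⟫ ≤ ‖z‖ ^ 2 := by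
      intro b _
      calc RCLike.re (K := ℂ) ⟪permComp (σ b) x, z⟫ ≤ ‖permComp (σ b) x‖ * ‖z‖ :=
            re_inner_le_norm _ _
      _ = ‖z‖ ^ 2 := by rw [hbnorm]; ring
    have : ∑ b : Fin n, RCLike.re (K := ℂ) ⟪permComp (σ b) x, z⟫ < ∑ _b : Fin n, ‖z‖ ^ 2 :=
      Finset.sum_lt_sum hle ⟨b₀, Finset.mem_univ _, hlt⟩
    rw [hsum2] at this
    simp only [Finset.sum_const, Finset.card_univ, Fintype.card_fin, nsmul_eq_mul] at this
    exact lt_irrefl _ this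
  have heq : permComp (σ a) x = z := by
    refine eq_of_norm_le_re_inner_eq_norm_sq (𝕜 := ℂ) (le_of_eq (hbnorm a)) ?_
    exact heach a
  exact congrFun (congrArg WithLp.ofLp heq) p

lemma fixed_word (σ : Fin n → Equiv.Perm (Fin D)) {x : EuclideanSpace ℂ (Fin D)} {μ : ℂ}
    (hfa : ∀ (a : Fin n) (p : Fin D), x (σ a p) = μ⁻¹ * x p) :
    ∀ (w : List (Fin n)) (p : Fin D), x (Tw σ w p) = μ⁻¹ ^ w.length * x p := by
  intro w
  induction w with
  | nil => intro p; simp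
  | cons a t ih =>
      intro p
      rw [Tw_cons, ih, hfa, List.length_cons, pow_succ]
      ring

lemma mem_eqLocus_iff (σ : Fin n → Equiv.Perm (Fin D)) (μ : ℂ) (x : EuclideanSpace ℂ (Fin D)) :
    x ∈ LinearMap.eqLocus
        ((μ • Bop σ : EuclideanSpace ℂ (Fin D) →L[ℂ] EuclideanSpace ℂ (Fin D)) :
          EuclideanSpace ℂ (Fin D) →ₗ[ℂ] EuclideanSpace ℂ (Fin D)) 1
      ↔ μ • (Bop σ x) = x := by
  rw [LinearMap.mem_eqLocus]
  simp

/-- Case `hp = 1`: the fixed space of `μ • B` is trivial for `μ ≠ 1`. -/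
lemma eqLocus_eq_bot (σ : Fin n → Equiv.Perm (Fin D)) (hn : 0 < n) (v0 : Fin D)
    (htrans : ∀ p q : Fin D, ∃ w : List (Fin n), Tw σ w p = q)
    {μ : ℂ} (hμn : ‖μ‖ = 1) (hμ1 : μ ≠ 1)
    (hgcd1 : ∀ e : ℕ,
      (∀ m : ℕ, 0 < m → (∃ w : List (Fin n), w.length = m ∧ Tw σ w v0 = v0) → e ∣ m) → e ∣ 1) :
    LinearMap.eqLocus
        ((μ • Bop σ : EuclideanSpace ℂ (Fin D) →L[ℂ] EuclideanSpace ℂ (Fin D)) :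
          EuclideanSpace ℂ (Fin D) →ₗ[ℂ] EuclideanSpace ℂ (Fin D)) 1 = ⊥ := by
  rw [Submodule.eq_bot_iff]
  intro x hx
  by_contra hx0
  have hfa := fixed_pointwise σ hn hμn ((mem_eqLocus_iff σ μ x).mp hx)
  have hxp : ∃ p, x p ≠ 0 := by
    by_contra hcon
    push_neg at hcon
    exact hx0 (by ext q; exact hcon q)
  obtain ⟨p, hp⟩ := hxp
  have hxv0 : x v0 ≠ 0 := by
    obtain ⟨w, hw⟩ := htrans v0 p
    intro hcon
    apply hp
    rw [← hw, fixed_word σ hfa, hcon, mul_zero]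
  have hdvd : ∀ m : ℕ, 0 < m → (∃ w : List (Fin n), w.length = m ∧ Tw σ w v0 = v0) →
      orderOf μ ∣ m := by
    rintro m _ ⟨w, hlen, hw⟩
    have h1 : x v0 = μ⁻¹ ^ m * x v0 := by
      conv_lhs => rw [← hw, fixed_word σ hfa, hlen]
    have h2 : μ⁻¹ ^ m = 1 := by
      have h1' : μ⁻¹ ^ m * x v0 = 1 * x v0 := by rw [one_mul]; exact h1.symm
      exact mul_right_cancel₀ hxv0 h1'
    have h3 : μ ^ m = 1 := by
      rw [inv_pow] at h2
      exact inv_eq_one.mp h2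
    exact orderOf_dvd_of_pow_eq_one h3
  have := Nat.dvd_one.mp (hgcd1 (orderOf μ) hdvd)
  exact hμ1 (orderOf_eq_one_iff.mp this)

lemma kappa_congr (σ : Fin n → Equiv.Perm (Fin D)) (v0 : Fin D)
    (htrans : ∀ p q : Fin D, ∃ w : List (Fin n), Tw σ w p = q)
    (P : ℕ) (hPd : ∀ m : ℕ, (∃ w : List (Fin n), w.length = m ∧ Tw σ w v0 = v0) → P ∣ m)
    {w1 w2 : List (Fin n)} {q : Fin D} (h1 : Tw σ w1 v0 = q) (h2 : Tw σ w2 v0 = q) :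
    (P : ℤ) ∣ (w1.length : ℤ) - (w2.length : ℤ) := by
  obtain ⟨w3, hw3⟩ := htrans q v0
  have r1 : P ∣ w1.length + w3.length :=
    hPd _ ⟨w1 ++ w3, by simp, by rw [Tw_append, h1, hw3]⟩
  have r2 : P ∣ w2.length + w3.length :=
    hPd _ ⟨w2 ++ w3, by simp, by rw [Tw_append, h2, hw3]⟩
  have d1 := Int.natCast_dvd_natCast.mpr r1
  have d2 := Int.natCast_dvd_natCast.mpr r2
  have key : ((w1.length + w3.length : ℕ) : ℤ) - ((w2.length + w3.length : ℕ) : ℤ)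
      = (w1.length : ℤ) - (w2.length : ℤ) := by push_cast; ring
  rw [← key]
  exact dvd_sub d1 d2

/-- The character vector associated with a choice of connecting words. -/
noncomputable def vch (wsel : Fin D → List (Fin n)) (μ : ℂ) : EuclideanSpace ℂ (Fin D) :=
  WithLp.toLp 2 (fun q => μ⁻¹ ^ (wsel q).length)

@[simp] lemma vch_apply (wsel : Fin D → List (Fin n)) (μ : ℂ) (q : Fin D) :
    vch wsel μ q = μ⁻¹ ^ (wsel q).length := rfl

/-- Case `hp = h`: the fixed space of `μ • B` is spanned by the character vector. -/
lemma eqLocus_eq_span (σ : Fin n → Equiv.Perm (Fin D)) (hn : 0 < n) (v0 : Fin D)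
    (htrans : ∀ p q : Fin D, ∃ w : List (Fin n), Tw σ w p = q)
    (wsel : Fin D → List (Fin n)) (hwsel : ∀ q, Tw σ (wsel q) v0 = q)
    (P : ℕ) (hPd : ∀ m : ℕ, (∃ w : List (Fin n), w.length = m ∧ Tw σ w v0 = v0) → P ∣ m)
    {μ : ℂ} (hμn : ‖μ‖ = 1) (hμP : μ ^ P = 1) :
    LinearMap.eqLocus
        ((μ • Bop σ : EuclideanSpace ℂ (Fin D) →L[ℂ] EuclideanSpace ℂ (Fin D)) :
          EuclideanSpace ℂ (Fin D) →ₗ[ℂ] EuclideanSpace ℂ (Fin D)) 1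
      = ℂ ∙ vch wsel μ := by
  have hμ0 : μ ≠ 0 := by intro hc; rw [hc] at hμn; simp at hμn
  have hn0 : (n : ℂ) ≠ 0 := Nat.cast_ne_zero.mpr hn.ne'
  have hμPinv : (μ⁻¹) ^ P = 1 := by rw [inv_pow, hμP, inv_one]
  set vchar : EuclideanSpace ℂ (Fin D) := vch wsel μ with hvchar
  have hstep : ∀ (a : Fin n) (p : Fin D), vchar (σ a p) = μ⁻¹ * vchar p := by
    intro a p
    have hpath : Tw σ (wsel p ++ [a]) v0 = σ a p := by
      rw [Tw_append, hwsel]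
      rfl
    have hd : (P : ℤ) ∣ ((wsel (σ a p)).length : ℤ) - ((wsel p ++ [a]).length : ℤ) :=
      kappa_congr σ v0 htrans P hPd (hwsel (σ a p)) hpath
    have hlen : (wsel p ++ [a]).length = (wsel p).length + 1 := by simp
    rw [hlen] at hd
    have : μ⁻¹ ^ (wsel (σ a p)).length = μ⁻¹ ^ ((wsel p).length + 1) :=
      pow_eq_pow_of_dvd_sub hμPinv (by exact_mod_cast hd)
    show μ⁻¹ ^ (wsel (σ a p)).length = μ⁻¹ * μ⁻¹ ^ (wsel p).length
    rw [this, pow_succ]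
    ring
  have hfix : vchar ∈ LinearMap.eqLocus
      ((μ • Bop σ : EuclideanSpace ℂ (Fin D) →L[ℂ] EuclideanSpace ℂ (Fin D)) :
        EuclideanSpace ℂ (Fin D) →ₗ[ℂ] EuclideanSpace ℂ (Fin D)) 1 := by
    rw [mem_eqLocus_iff]
    ext p
    show μ * (Bop σ vchar p) = vchar p
    rw [Bop_apply]
    rw [Finset.sum_congr rfl fun a _ => hstep a p, Finset.sum_const]
    simp only [Finset.card_univ, Fintype.card_fin, nsmul_eq_mul]
    field_simp
  ext x
  rw [Submodule.mem_span_singleton]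
  constructor
  · intro hx
    have hfa := fixed_pointwise σ hn hμn ((mem_eqLocus_iff σ μ x).mp hx)
    refine ⟨x v0, ?_⟩
    ext q
    show x v0 * vchar q = x q
    have : x q = x (Tw σ (wsel q) v0) := by rw [hwsel]
    rw [this, fixed_word σ hfa]
    show x v0 * μ⁻¹ ^ (wsel q).length = _
    ring
  · rintro ⟨c, rfl⟩
    exact Submodule.smul_mem _ c hfix

/-! ### Projection values and the mean ergodic limits -/

lemma smul_Bop_iterate (σ : Fin n → Equiv.Perm (Fin D)) (μ : ℂ) (m : ℕ)
    (x : EuclideanSpace ℂ (Fin D)) :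
    (⇑(μ • Bop σ))^[m] x = μ ^ m • ((⇑(Bop σ))^[m] x) := by
  induction m with
  | zero => simp
  | succ m ih =>
      rw [Function.iterate_succ_apply', ih, Function.iterate_succ_apply']
      show (μ • Bop σ) (μ ^ m • (⇑(Bop σ))^[m] x) = _
      rw [ContinuousLinearMap.smul_apply, map_smul, smul_smul]
      rw [pow_succ, mul_comm]

lemma inner_birkhoff (σ : Fin n → Equiv.Perm (Fin D)) (A : Matrix (Fin D) (Fin D) ℕ)
    (hA : ∀ p q, A p q = (univ.filter fun a : Fin n => σ a p = q).card)
    (v0 vα : Fin D) (μ : ℂ) (M : ℕ) :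
    ⟪(EuclideanSpace.single v0 1 : EuclideanSpace ℂ (Fin D)),
        birkhoffAverage ℂ (⇑(μ • Bop σ)) _root_.id M (EuclideanSpace.single vα 1)⟫
      = (M : ℂ)⁻¹ * ∑ m ∈ Finset.range M, μ ^ m * ((A ^ m) v0 vα : ℂ) / (n : ℂ) ^ m := by
  rw [birkhoffAverage, birkhoffSum, inner_smul_right, inner_sum]
  congr 1
  refine Finset.sum_congr rfl fun m _ => ?_
  rw [id_eq, smul_Bop_iterate, inner_smul_right, EuclideanSpace.inner_single_left]
  rw [Bop_iter_single σ A hA m v0 vα]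
  rw [map_one, one_mul, mul_div_assoc]

lemma tendsto_seq_inner_proj (σ : Fin n → Equiv.Perm (Fin D))
    (A : Matrix (Fin D) (Fin D) ℕ)
    (hA : ∀ p q, A p q = (univ.filter fun a : Fin n => σ a p = q).card)
    (v0 vα : Fin D) (μ : ℂ) (hμn : ‖μ‖ = 1) :
    Tendsto (fun M : ℕ => (M : ℂ)⁻¹ * ∑ m ∈ Finset.range M,
        μ ^ m * ((A ^ m) v0 vα : ℂ) / (n : ℂ) ^ m) atTop
      (𝓝 ⟪(EuclideanSpace.single v0 1 : EuclideanSpace ℂ (Fin D)),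
        ((Submodule.orthogonalProjectionOnto (LinearMap.eqLocus
          ((μ • Bop σ : EuclideanSpace ℂ (Fin D) →L[ℂ] EuclideanSpace ℂ (Fin D)) :
            EuclideanSpace ℂ (Fin D) →ₗ[ℂ] EuclideanSpace ℂ (Fin D)) 1)
          (EuclideanSpace.single vα 1)) : EuclideanSpace ℂ (Fin D))⟫) := by
  have hmet := ContinuousLinearMap.tendsto_birkhoffAverage_orthogonalProjection (𝕜 := ℂ)
    (μ • Bop σ) (norm_smul_Bop_le σ hμn) (EuclideanSpace.single vα 1)
  have h2 := Filter.Tendsto.inner (𝕜 := ℂ)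
    (tendsto_const_nhds (x := (EuclideanSpace.single v0 1 : EuclideanSpace ℂ (Fin D))))
    hmet
  have h3 : (fun M : ℕ => ⟪(EuclideanSpace.single v0 1 : EuclideanSpace ℂ (Fin D)),
      birkhoffAverage ℂ (⇑(μ • Bop σ)) _root_.id M (EuclideanSpace.single vα 1)⟫)
      = fun M : ℕ => (M : ℂ)⁻¹ * ∑ m ∈ Finset.range M,
        μ ^ m * ((A ^ m) v0 vα : ℂ) / (n : ℂ) ^ m :=
    funext fun M => inner_birkhoff σ A hA v0 vα μ M
  rw [← h3]
  exact h2

/-- Limit for the aperiodic graphs. -/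
lemma tendsto_case_one (σ : Fin n → Equiv.Perm (Fin D)) (hn : 0 < n)
    (A : Matrix (Fin D) (Fin D) ℕ)
    (hA : ∀ p q, A p q = (univ.filter fun a : Fin n => σ a p = q).card)
    (v0 vα : Fin D)
    (htrans : ∀ p q : Fin D, ∃ w : List (Fin n), Tw σ w p = q)
    (hgcd1 : ∀ e : ℕ,
      (∀ m : ℕ, 0 < m → (∃ w : List (Fin n), w.length = m ∧ Tw σ w v0 = v0) → e ∣ m) → e ∣ 1)
    {μ : ℂ} (hμn : ‖μ‖ = 1) (hμ1 : μ ≠ 1) :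
    Tendsto (fun M : ℕ => (M : ℂ)⁻¹ * ∑ m ∈ Finset.range M,
        μ ^ m * ((A ^ m) v0 vα : ℂ) / (n : ℂ) ^ m) atTop (𝓝 0) := by
  have h := tendsto_seq_inner_proj σ A hA v0 vα μ hμn
  rwa [eqLocus_eq_bot σ hn v0 htrans hμn hμ1 hgcd1, Submodule.orthogonalProjectionOnto_bot,
    ContinuousLinearMap.zero_apply, ZeroMemClass.coe_zero, inner_zero_right] at h

lemma norm_vchar_sq (wsel : Fin D → List (Fin n)) {μ : ℂ} (hμn : ‖μ‖ = 1) :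
    ‖vch wsel μ‖ ^ 2 = D := by
  rw [EuclideanSpace.norm_eq (vch wsel μ)]
  have h1 : ∀ q : Fin D, ‖vch wsel μ q‖ ^ 2
      = 1 := by
    intro q
    show ‖μ⁻¹ ^ (wsel q).length‖ ^ 2 = 1
    rw [norm_pow, norm_inv, hμn]
    norm_num
  rw [Finset.sum_congr rfl fun q _ => h1 q, Finset.sum_const, Finset.card_univ,
    Fintype.card_fin, nsmul_eq_mul, mul_one]
  rw [Real.sq_sqrt (by positivity)]

/-- Limit for the period-`h` graphs. -/
lemma tendsto_case_h (σ : Fin n → Equiv.Perm (Fin D)) (hn : 0 < n)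
    (A : Matrix (Fin D) (Fin D) ℕ)
    (hA : ∀ p q, A p q = (univ.filter fun a : Fin n => σ a p = q).card)
    (v0 vα : Fin D)
    (htrans : ∀ p q : Fin D, ∃ w : List (Fin n), Tw σ w p = q)
    (wsel : Fin D → List (Fin n)) (hwsel : ∀ q, Tw σ (wsel q) v0 = q)
    (P : ℕ) (hPd : ∀ m : ℕ, (∃ w : List (Fin n), w.length = m ∧ Tw σ w v0 = v0) → P ∣ m)
    {μ : ℂ} (hμn : ‖μ‖ = 1) (hμP : μ ^ P = 1) :
    Tendsto (fun M : ℕ => (M : ℂ)⁻¹ * ∑ m ∈ Finset.range M,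
        μ ^ m * ((A ^ m) v0 vα : ℂ) / (n : ℂ) ^ m) atTop
      (𝓝 (μ ^ (wsel vα).length / (D : ℂ))) := by
  have hμ0 : μ ≠ 0 := by intro hc; rw [hc] at hμn; simp at hμn
  have h := tendsto_seq_inner_proj σ A hA v0 vα μ hμn
  rw [eqLocus_eq_span σ hn v0 htrans wsel hwsel P hPd hμn hμP] at h
  set vchar : EuclideanSpace ℂ (Fin D) := vch wsel μ with hvchar
  have hproj : (Submodule.orthogonalProjectionOnto (ℂ ∙ vchar) (EuclideanSpace.single vα 1) :
      EuclideanSpace ℂ (Fin D))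
      = (⟪vchar, (EuclideanSpace.single vα 1 : EuclideanSpace ℂ (Fin D))⟫
          / ((‖vchar‖ ^ 2 : ℝ) : ℂ)) • vchar :=
    Submodule.starProjection_singleton ℂ _
  rw [hproj] at h
  have hval : ⟪(EuclideanSpace.single v0 1 : EuclideanSpace ℂ (Fin D)),
      (⟪vchar, (EuclideanSpace.single vα 1 : EuclideanSpace ℂ (Fin D))⟫
        / ((‖vchar‖ ^ 2 : ℝ) : ℂ)) • vchar⟫ = μ ^ (wsel vα).length / (D : ℂ) := by
    rw [inner_smul_right, EuclideanSpace.inner_single_left, map_one, one_mul]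
    have hv0 : vchar v0 = 1 := by
      show μ⁻¹ ^ (wsel v0).length = 1
      have : P ∣ (wsel v0).length := hPd _ ⟨wsel v0, rfl, hwsel v0⟩
      obtain ⟨k, hk⟩ := this
      rw [hk, pow_mul, inv_pow, hμP, inv_one, one_pow]
    have hinner : ⟪vchar, (EuclideanSpace.single vα 1 : EuclideanSpace ℂ (Fin D))⟫
        = μ ^ (wsel vα).length := by
      have := EuclideanSpace.inner_single_right (𝕜 := ℂ) vα 1 vchar
      rw [this, mul_comm, mul_one]
      show (starRingEnd ℂ) (μ⁻¹ ^ (wsel vα).length) = μ ^ (wsel vα).length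
      rw [map_pow, map_inv₀]
      congr 1
      rw [← Complex.inv_eq_conj (by simpa using hμn), inv_inv]
    rw [hinner, hv0, mul_one]
    rw [show (‖vchar‖ : ℝ) ^ 2 = (D : ℝ) from norm_vchar_sq wsel hμn]
    norm_cast
  rwa [hval] at h

/-- Average of a nontrivial geometric series tends to `0`. -/
lemma tendsto_avg_geom {μ : ℂ} (hμn : ‖μ‖ = 1) (hμ1 : μ ≠ 1) :
    Tendsto (fun M : ℕ => (M : ℂ)⁻¹ * ∑ m ∈ Finset.range M, μ ^ m) atTop (𝓝 0) := by
  have hb : ∀ M : ℕ, ‖(M : ℂ)⁻¹ * ∑ m ∈ Finset.range M, μ ^ m‖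
      ≤ (2 / ‖μ - 1‖) / (M : ℝ) := by
    intro M
    rw [norm_mul, norm_inv, Complex.norm_natCast]
    have hgeom : ∑ m ∈ Finset.range M, μ ^ m = (μ ^ M - 1) / (μ - 1) := geom_sum_eq hμ1 M
    rw [hgeom, norm_div]
    have h1 : ‖μ ^ M - 1‖ ≤ 2 := by
      calc ‖μ ^ M - 1‖ ≤ ‖μ ^ M‖ + ‖(1:ℂ)‖ := norm_sub_le _ _
      _ = 2 := by rw [norm_pow, hμn, one_pow, norm_one]; norm_num
    have hd : 0 < ‖μ - 1‖ := by
      rw [norm_pos_iff]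
      exact sub_ne_zero.mpr hμ1
    have h2 : ‖μ ^ M - 1‖ / ‖μ - 1‖ ≤ 2 / ‖μ - 1‖ := by gcongr
    calc (M:ℝ)⁻¹ * (‖μ ^ M - 1‖ / ‖μ - 1‖) ≤ (M:ℝ)⁻¹ * (2 / ‖μ - 1‖) :=
          mul_le_mul_of_nonneg_left h2 (by positivity)
      _ = (2 / ‖μ - 1‖) / (M:ℝ) := by ring
  have hto : Tendsto (fun M : ℕ => (2 / ‖μ - 1‖) / (M : ℝ)) atTop (𝓝 0) :=
    tendsto_const_div_atTop_nhds_zero_nat _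
  exact squeeze_zero_norm hb hto

/-! ### Translation from coset data to permutation actions -/

lemma sum_pow_root {β : ℂ} {h : ℕ} (hh : h ≠ 0) (hβ : β ^ h = 1) :
    ∑ j ∈ Finset.range h, β ^ j = if β = 1 then (h : ℂ) else 0 := by
  split_ifs with hb
  · subst hb; simp
  · rw [geom_sum_eq hb, hβ, sub_self, zero_div]

def prodW (w : List (Fin n)) : FreeGroup (Fin n) := (w.map FreeGroup.of).prod

lemma prodW_cons (a : Fin n) (t : List (Fin n)) :
    prodW (a :: t) = FreeGroup.of a * prodW t := by
  simp [prodW]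

variable {K : Subgroup (FreeGroup (Fin n))} {cc : FreeGroup (Fin n) → Fin D}

lemma exists_sigma (hsurj : Function.Surjective cc)
    (hcc : ∀ x y, cc x = cc y ↔ x * y⁻¹ ∈ K) :
    ∃ σ : Fin n → Equiv.Perm (Fin D),
      ∀ (g : FreeGroup (Fin n)) (a : Fin n), cc (g * FreeGroup.of a) = σ a (cc g) := by
  have hrep : ∀ p, cc (Function.surjInv hsurj p) = p := fun p => Function.surjInv_eq hsurj p
  set f : Fin n → Fin D → Fin D :=
    fun a p => cc (Function.surjInv hsurj p * FreeGroup.of a) with hf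
  have key : ∀ (g : FreeGroup (Fin n)) (a : Fin n), cc (g * FreeGroup.of a) = f a (cc g) := by
    intro g a
    apply (hcc _ _).mpr
    have h1 : g * (Function.surjInv hsurj (cc g))⁻¹ ∈ K := by
      apply (hcc _ _).mp
      rw [hrep]
    have h2 : g * FreeGroup.of a * (Function.surjInv hsurj (cc g) * FreeGroup.of a)⁻¹
        = g * (Function.surjInv hsurj (cc g))⁻¹ := by group
    rw [h2]
    exact h1
  have hinj : ∀ a, Function.Injective (f a) := by
    intro a p p' hpp
    obtain ⟨g, rfl⟩ := hsurj p
    obtain ⟨g', rfl⟩ := hsurj p'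
    rw [← key, ← key] at hpp
    have h2 : g * FreeGroup.of a * (g' * FreeGroup.of a)⁻¹ ∈ K := (hcc _ _).mp hpp
    apply (hcc _ _).mpr
    have h3 : g * g'⁻¹ = g * FreeGroup.of a * (g' * FreeGroup.of a)⁻¹ := by group
    rw [h3]
    exact h2
  exact ⟨fun a => Equiv.ofBijective (f a) (Finite.injective_iff_bijective.mp (hinj a)),
    fun g a => key g a⟩

lemma cc_prodW (σ : Fin n → Equiv.Perm (Fin D))
    (hσ : ∀ (g : FreeGroup (Fin n)) (a : Fin n), cc (g * FreeGroup.of a) = σ a (cc g)) :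
    ∀ (w : List (Fin n)) (g : FreeGroup (Fin n)), cc (g * prodW w) = Tw σ w (cc g) := by
  intro w
  induction w with
  | nil =>
      intro g
      have : prodW ([] : List (Fin n)) = 1 := by simp [prodW]
      rw [this, mul_one, Tw_nil]
  | cons a t ih =>
      intro g
      rw [prodW_cons, ← mul_assoc, Tw_cons, ih, hσ]

lemma trans_of_sigma (hsurj : Function.Surjective cc)
    (σ : Fin n → Equiv.Perm (Fin D))
    (hσ : ∀ (g : FreeGroup (Fin n)) (a : Fin n), cc (g * FreeGroup.of a) = σ a (cc g)) :
    ∀ p q : Fin D, ∃ w : List (Fin n), Tw σ w p = q := by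
  have hinv : ∀ (g : FreeGroup (Fin n)) (a : Fin n),
      cc (g * (FreeGroup.of a)⁻¹) = (σ a)⁻¹ (cc g) := by
    intro g a
    have h1 := hσ (g * (FreeGroup.of a)⁻¹) a
    rw [inv_mul_cancel_right] at h1
    rw [h1, ← Equiv.Perm.mul_apply, inv_mul_cancel, Equiv.Perm.one_apply]
  intro p q
  have hfwd : ∀ (q' : Fin D) (a : Fin n), (∃ w, Tw σ w p = q') → ∃ w, Tw σ w p = σ a q' := by
    rintro q' a ⟨w, hw⟩
    exact ⟨w ++ [a], by rw [Tw_append, hw]; rfl⟩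
  have hbwd : ∀ (q' : Fin D) (a : Fin n),
      (∃ w, Tw σ w p = q') → ∃ w, Tw σ w p = (σ a)⁻¹ q' := by
    rintro q' a ⟨w, hw⟩
    have hk : 0 < orderOf (σ a) := orderOf_pos _
    refine ⟨w ++ List.replicate (orderOf (σ a) - 1) a, ?_⟩
    rw [Tw_append, hw, Tw_replicate]
    have h2 : (σ a) ^ (orderOf (σ a) - 1) * σ a = 1 := by
      rw [← pow_succ, Nat.sub_add_cancel hk, pow_orderOf_eq_one]
    rw [eq_inv_of_mul_eq_one_left h2]
  have main : ∀ g : FreeGroup (Fin n), ∀ z : FreeGroup (Fin n),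
      (∃ w, Tw σ w p = cc z) → ∃ w, Tw σ w p = cc (z * g) := by
    intro g
    refine FreeGroup.induction_on
      (C := fun g => ∀ z : FreeGroup (Fin n),
        (∃ w, Tw σ w p = cc z) → ∃ w, Tw σ w p = cc (z * g)) g ?_ ?_ ?_ ?_
    · intro z hz
      rwa [mul_one]
    · intro a z hz
      rw [hσ]
      exact hfwd _ a hz
    · intro a _ z hz
      rw [hinv]
      exact hbwd _ a hz
    · intro g₁ g₂ ih₁ ih₂ z hz
      rw [← mul_assoc]
      exact ih₂ _ (ih₁ _ hz)
  obtain ⟨y, hy⟩ := hsurj q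
  obtain ⟨x, hx⟩ := hsurj p
  have base : ∃ w, Tw σ w p = cc x := ⟨[], by rw [Tw_nil, hx]⟩
  have hm := main (x⁻¹ * y) x base
  rwa [mul_inv_cancel_left, hy] at hm

lemma prim_pow_eq_pow_iff {ζ : ℂ} {h : ℕ} (hζ : IsPrimitiveRoot ζ h) (hζ0 : ζ ≠ 0)
    (a b : ℕ) : ζ ^ a = ζ ^ b ↔ a ≡ b [MOD h] := by
  have key : ∀ a b : ℕ, b ≤ a → (ζ ^ a = ζ ^ b ↔ a ≡ b [MOD h]) := by
    intro a b hba
    have h1 : ζ ^ a = ζ ^ b * ζ ^ (a - b) := by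
      rw [← pow_add, Nat.add_sub_cancel' hba]
    rw [h1]
    have hcancel : ζ ^ b * ζ ^ (a - b) = ζ ^ b ↔ ζ ^ (a - b) = 1 := by
      constructor
      · intro he
        exact mul_left_cancel₀ (pow_ne_zero b hζ0) (he.trans (mul_one _).symm)
      · intro he
        rw [he, mul_one]
    rw [hcancel, hζ.pow_eq_one_iff_dvd]
    constructor
    · intro hdvd
      exact ((Nat.modEq_iff_dvd' hba).mpr hdvd).symm
    · intro hmod
      exact (Nat.modEq_iff_dvd' hba).mp hmod.symm
  rcases le_total b a with hba | hab
  · exact key a b hba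
  · constructor
    · intro he
      exact ((key b a hab).mp he.symm).symm
    · intro he
      exact ((key b a hab).mpr he.symm).symm

end UPM

open UPM Filter Finset in
/-- For a coset partition of `F_n` (`n ≥ 2`) in which exactly one period value
`h > 1` occurs, with `r` repetitions and `h < r ≤ 2(h−1)`, the partition has
multiplicity. -/
theorem unique_period_multiplicity
    (n s : ℕ) (hn : 2 ≤ n)
    (H : Fin s → Subgroup (FreeGroup (Fin n))) (α : Fin s → FreeGroup (Fin n))
    (d : Fin s → ℕ) (hd : ∀ i, 1 < d i)
    (hpart : ∀ g : FreeGroup (Fin n), ∃! i : Fin s, g * (α i)⁻¹ ∈ H i)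
    (c : (i : Fin s) → FreeGroup (Fin n) → Fin (d i))
    (hcsurj : ∀ i, Function.Surjective (c i))
    (hc : ∀ (i : Fin s) (x y : FreeGroup (Fin n)), c i x = c i y ↔ x * y⁻¹ ∈ H i)
    (A : (i : Fin s) → Matrix (Fin (d i)) (Fin (d i)) ℕ)
    (hA : ∀ (i : Fin s) (p q : Fin (d i)), A i p q =
      Set.ncard {a : Fin n | ∃ g, c i g = p ∧ c i (g * FreeGroup.of a) = q})
    (hp : Fin s → ℕ)
    (hpdvd : ∀ (i : Fin s) (m : ℕ), 0 < m → 0 < ((A i) ^ m) (c i 1) (c i 1) → hp i ∣ m)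
    (hpgcd : ∀ (i : Fin s) (e : ℕ),
      (∀ m : ℕ, 0 < m → 0 < ((A i) ^ m) (c i 1) (c i 1) → e ∣ m) → e ∣ hp i)
    (h : ℕ) (hh : 1 < h)
    (honly : ∀ i : Fin s, 1 < hp i → hp i = h)
    (hex : ∃ i : Fin s, hp i = h)
    (r : ℕ) (hr : r = (Finset.univ.filter (fun i : Fin s => hp i = h)).card)
    (hlt : h < r) (hle : r ≤ 2 * (h - 1)) :
    ∃ j k : Fin s, j ≠ k ∧ d j = d k := by
  classical
  have hn1 : 0 < n := by omega
  have hh0 : h ≠ 0 := by omega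
  -- Schreier permutation actions
  have hσex : ∀ i : Fin s, ∃ σi : Fin n → Equiv.Perm (Fin (d i)),
      ∀ (g : FreeGroup (Fin n)) (a : Fin n), c i (g * FreeGroup.of a) = σi a (c i g) :=
    fun i => UPM.exists_sigma (K := H i) (hcsurj i) (hc i)
  choose σ hσ using hσex
  have htrans : ∀ i : Fin s, ∀ p q : Fin (d i), ∃ w : List (Fin n), UPM.Tw (σ i) w p = q :=
    fun i => UPM.trans_of_sigma (hcsurj i) (σ i) (hσ i)
  have hAcard : ∀ (i : Fin s) (p q : Fin (d i)),
      A i p q = (Finset.univ.filter fun a : Fin n => σ i a p = q).card := by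
    intro i p q
    rw [hA i p q]
    have hset : {a : Fin n | ∃ g, c i g = p ∧ c i (g * FreeGroup.of a) = q}
        = {a : Fin n | σ i a p = q} := by
      ext a
      constructor
      · rintro ⟨g, hg1, hg2⟩
        rw [hσ i g a, hg1] at hg2
        exact hg2
      · intro ha
        obtain ⟨g, hg⟩ := hcsurj i p
        exact ⟨g, hg, by rw [hσ i g a, hg]; exact ha⟩
    rw [hset, Set.ncard_eq_toFinset_card', Set.toFinset_setOf]
  have hret : ∀ (i : Fin s) (m : ℕ), 0 < ((A i) ^ m) (c i 1) (c i 1) ↔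
      ∃ w : List (Fin n), w.length = m ∧ UPM.Tw (σ i) w (c i 1) = c i 1 :=
    fun i m => UPM.pow_pos_iff (σ i) (A i) (hAcard i) m _ _
  have hppos : ∀ i, hp i ≠ 0 := by
    intro i h0
    obtain ⟨m, hm, hwret⟩ := UPM.exists_return hn1 (σ i) (c i 1)
    have hdv := hpdvd i m hm ((hret i m).mpr hwret)
    rw [h0, zero_dvd_iff] at hdv
    omega
  have hhp1 : ∀ i : Fin s, hp i ≠ h → hp i = 1 := by
    intro i hne
    by_contra h1
    have h2 : 1 < hp i := by have := hppos i; omega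
    exact hne (honly i h2)
  -- the primitive root
  set ζ : ℂ := Complex.exp (2 * Real.pi * Complex.I / h) with hζdef
  have hζ : IsPrimitiveRoot ζ h := Complex.isPrimitiveRoot_exp h hh0
  have hζh : ζ ^ h = 1 := hζ.pow_eq_one
  have hζn : ‖ζ‖ = 1 := by
    rw [hζdef]
    have h1 : 2 * (Real.pi : ℂ) * Complex.I / (h : ℂ)
        = ((2 * Real.pi / h : ℝ) : ℂ) * Complex.I := by push_cast; ring
    rw [h1, Complex.norm_exp_ofReal_mul_I]
  have hζ0 : ζ ≠ 0 := Complex.exp_ne_zero _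
  -- chosen connecting words and the class invariants
  have hwsel_ex : ∀ i : Fin s, ∃ ws : Fin (d i) → List (Fin n),
      ∀ q, UPM.Tw (σ i) (ws q) (c i 1) = q :=
    fun i => ⟨fun q => Classical.choose (htrans i (c i 1) q),
      fun q => Classical.choose_spec (htrans i (c i 1) q)⟩
  choose wsel hwsel using hwsel_ex
  set t : Fin s → ℕ := fun i => (wsel i (c i (α i))).length with ht
  set R : Finset (Fin s) := Finset.univ.filter (fun i : Fin s => hp i = h) with hR
  -- the partition count identity
  have hcount : ∀ m : ℕ, (∑ i : Fin s, ((A i) ^ m) (c i 1) (c i (α i))) = n ^ m := by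
    intro m
    have hcp : ∀ i : Fin s, ((A i) ^ m) (c i 1) (c i (α i))
        = (Finset.univ.filter
            (fun w : Fin m → Fin n => UPM.Tw (σ i) (List.ofFn w) (c i 1) = c i (α i))).card :=
      fun i => UPM.count_pow (σ i) (A i) (hAcard i) m _ _
    rw [Finset.sum_congr rfl fun i _ => hcp i]
    have huniq : ∀ w : Fin m → Fin n, ∃! i : Fin s,
        UPM.Tw (σ i) (List.ofFn w) (c i 1) = c i (α i) := by
      intro w
      obtain ⟨i₀, hi₀, hu⟩ := hpart (UPM.prodW (List.ofFn w))
      have hiff : ∀ i : Fin s, (UPM.Tw (σ i) (List.ofFn w) (c i 1) = c i (α i))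
          ↔ UPM.prodW (List.ofFn w) * (α i)⁻¹ ∈ H i := by
        intro i
        rw [← hc i (UPM.prodW (List.ofFn w)) (α i)]
        have hcw : UPM.Tw (σ i) (List.ofFn w) (c i 1) = c i (UPM.prodW (List.ofFn w)) := by
          rw [← UPM.cc_prodW (σ i) (hσ i) (List.ofFn w) 1, one_mul]
        rw [hcw]
      exact ⟨i₀, (hiff i₀).mpr hi₀, fun i hi => hu i ((hiff i).mp hi)⟩
    have hcf : ∀ i : Fin s, (Finset.univ.filter (fun w : Fin m → Fin n =>
        UPM.Tw (σ i) (List.ofFn w) (c i 1) = c i (α i))).card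
        = ∑ w : Fin m → Fin n,
          if UPM.Tw (σ i) (List.ofFn w) (c i 1) = c i (α i) then 1 else 0 :=
      fun i => Finset.card_filter _ _
    rw [Finset.sum_congr rfl fun i _ => hcf i, Finset.sum_comm]
    have hone : ∀ w : Fin m → Fin n, (∑ i : Fin s,
        if UPM.Tw (σ i) (List.ofFn w) (c i 1) = c i (α i) then 1 else 0) = 1 := by
      intro w
      obtain ⟨i₀, hi₀, hu⟩ := huniq w
      have hiffi : ∀ i : Fin s,
          (UPM.Tw (σ i) (List.ofFn w) (c i 1) = c i (α i)) ↔ i = i₀ :=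
        fun i => ⟨fun hi => hu i hi, fun hi => hi ▸ hi₀⟩
      rw [Finset.sum_congr rfl fun i _ => by rw [if_congr (hiffi i) rfl rfl]]
      rw [Finset.sum_ite_eq' Finset.univ i₀ (fun _ => 1), if_pos (Finset.mem_univ i₀)]
    rw [Finset.sum_congr rfl fun w _ => hone w, Finset.sum_const, Finset.card_univ]
    rw [Fintype.card_fun]
    simp
  -- the key orthogonality identities
  have hkey : ∀ j : ℕ, 0 < j → j < h →
      ∑ i ∈ R, (ζ ^ j) ^ t i / (d i : ℂ) = 0 := by
    intro j hj0 hjh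
    have hμn : ‖ζ ^ j‖ = 1 := by rw [norm_pow, hζn, one_pow]
    have hμ1 : ζ ^ j ≠ 1 := hζ.pow_ne_one_of_pos_of_lt hj0.ne' hjh
    have hLi : ∀ i : Fin s, Filter.Tendsto (fun M : ℕ => (M : ℂ)⁻¹ * ∑ m ∈ Finset.range M,
        (ζ ^ j) ^ m * (((A i) ^ m) (c i 1) (c i (α i)) : ℂ) / (n : ℂ) ^ m) Filter.atTop
        (𝓝 (if hp i = h then (ζ ^ j) ^ t i / (d i : ℂ) else 0)) := by
      intro i
      by_cases hpi : hp i = h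
      · rw [if_pos hpi]
        refine UPM.tendsto_case_h (σ i) hn1 (A i) (hAcard i) (c i 1) (c i (α i))
          (htrans i) (wsel i) (hwsel i) h ?_ hμn ?_
        · intro m hm
          rcases Nat.eq_zero_or_pos m with rfl | hmpos
          · exact dvd_zero h
          · have := hpdvd i m hmpos ((hret i m).mpr hm)
            rwa [hpi] at this
        · rw [← pow_mul, mul_comm j h, pow_mul, hζh, one_pow]
      · rw [if_neg hpi]
        have hp1 : hp i = 1 := hhp1 i hpi
        refine UPM.tendsto_case_one (σ i) hn1 (A i) (hAcard i) (c i 1) (c i (α i))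
          (htrans i) ?_ hμn hμ1
        intro e he
        have := hpgcd i e (fun m hm hpos => he m hm ((hret i m).mp hpos))
        rwa [hp1] at this
    have hsum1 := tendsto_finset_sum (Finset.univ : Finset (Fin s)) (fun i _ => hLi i)
    have hswap : (fun M : ℕ => ∑ i : Fin s, ((M : ℂ)⁻¹ * ∑ m ∈ Finset.range M,
        (ζ ^ j) ^ m * (((A i) ^ m) (c i 1) (c i (α i)) : ℂ) / (n : ℂ) ^ m))
        = fun M : ℕ => (M : ℂ)⁻¹ * ∑ m ∈ Finset.range M, (ζ ^ j) ^ m := by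
      funext M
      rw [← Finset.mul_sum]
      congr 1
      rw [Finset.sum_comm]
      refine Finset.sum_congr rfl fun m _ => ?_
      have hcnt : (∑ i : Fin s, (((A i) ^ m) (c i 1) (c i (α i)) : ℂ)) = (n : ℂ) ^ m := by
        have h1 := hcount m
        exact_mod_cast congrArg (Nat.cast : ℕ → ℂ) h1
      have hn0 : ((n : ℂ)) ^ m ≠ 0 := pow_ne_zero _ (Nat.cast_ne_zero.mpr hn1.ne')
      rw [← Finset.sum_div, ← Finset.mul_sum, hcnt, mul_div_assoc, div_self hn0, mul_one]
    rw [hswap] at hsum1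
    have hzero := UPM.tendsto_avg_geom hμn hμ1
    have huniq2 := tendsto_nhds_unique hsum1 hzero
    -- huniq2 : Σ_i ite = 0
    rw [← huniq2, hR]
    exact (Finset.sum_filter _ _)
  -- Fourier inversion: the fiber sums are all equal
  haveI : NeZero h := ⟨hh0⟩
  set fib : ZMod h → Finset (Fin s) :=
    fun τ => R.filter (fun i => ((t i : ZMod h) = τ)) with hfib
  have hW : ∀ τ : ZMod h,
      (h : ℂ) * ∑ i ∈ fib τ, ((d i : ℂ))⁻¹ = ∑ i ∈ R, ((d i : ℂ))⁻¹ := by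
    intro τ
    have hLHS : ∑ j ∈ Finset.range h, ((ζ ^ τ.val)⁻¹) ^ j *
        (∑ i ∈ R, (ζ ^ j) ^ t i / (d i : ℂ)) = ∑ i ∈ R, ((d i : ℂ))⁻¹ := by
      rw [Finset.sum_eq_single_of_mem 0 (Finset.mem_range.mpr (by omega))]
      · simp [one_div]
      · intro j hj hj0
        rw [hkey j (Nat.pos_of_ne_zero hj0) (Finset.mem_range.mp hj), mul_zero]
    have hRHS : ∑ j ∈ Finset.range h, ((ζ ^ τ.val)⁻¹) ^ j *
        (∑ i ∈ R, (ζ ^ j) ^ t i / (d i : ℂ))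
        = (h : ℂ) * ∑ i ∈ fib τ, ((d i : ℂ))⁻¹ := by
      have hterm : ∀ j ∈ Finset.range h, ((ζ ^ τ.val)⁻¹) ^ j *
          (∑ i ∈ R, (ζ ^ j) ^ t i / (d i : ℂ))
          = ∑ i ∈ R, (ζ ^ t i * (ζ ^ τ.val)⁻¹) ^ j / (d i : ℂ) := by
        intro j _
        rw [Finset.mul_sum]
        refine Finset.sum_congr rfl fun i _ => ?_
        rw [mul_pow]
        rw [show (ζ ^ j) ^ t i = (ζ ^ t i) ^ j by
          rw [← pow_mul, ← pow_mul, mul_comm]]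
        ring
      rw [Finset.sum_congr rfl hterm, Finset.sum_comm]
      have hβh : ∀ i : Fin s, (ζ ^ t i * (ζ ^ τ.val)⁻¹) ^ h = 1 := by
        intro i
        rw [mul_pow, ← pow_mul, mul_comm (t i) h, pow_mul, hζh, one_pow, inv_pow, ← pow_mul,
          mul_comm (τ.val) h, pow_mul, hζh, one_pow, inv_one, mul_one]
      have hgeo : ∀ i : Fin s, (∑ j ∈ Finset.range h, (ζ ^ t i * (ζ ^ τ.val)⁻¹) ^ j)
          = if ((t i : ZMod h) = τ) then (h : ℂ) else 0 := by
        intro i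
        rw [UPM.sum_pow_root hh0 (hβh i)]
        have hiff : (ζ ^ t i * (ζ ^ τ.val)⁻¹ = 1) ↔ ((t i : ZMod h) = τ) := by
          rw [mul_inv_eq_one₀ (pow_ne_zero _ hζ0)]
          rw [UPM.prim_pow_eq_pow_iff hζ hζ0]
          rw [← ZMod.natCast_eq_natCast_iff]
          constructor
          · intro hcast
            rw [hcast]
            exact ZMod.natCast_rightInverse τ
          · intro hcast
            rw [hcast]
            exact (ZMod.natCast_rightInverse τ).symm
        exact if_congr hiff rfl rfl
      have hperi : ∀ i ∈ R, (∑ j ∈ Finset.range h, (ζ ^ t i * (ζ ^ τ.val)⁻¹) ^ j / (d i : ℂ))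
          = if ((t i : ZMod h) = τ) then (h : ℂ) * ((d i : ℂ))⁻¹ else 0 := by
        intro i _
        rw [← Finset.sum_div, hgeo i]
        split_ifs
        · rw [div_eq_mul_inv]
        · rw [zero_div]
      rw [Finset.sum_congr rfl hperi, ← Finset.sum_filter, ← Finset.mul_sum]
    rw [← hRHS, hLHS]
  have hRcard : R.card = r := by rw [hR]; exact hr.symm
  have hRne : R.Nonempty := by
    rw [← Finset.card_pos, hRcard]
    omega
  -- transfer to real fiber sums
  have hWr : ∀ τ₁ τ₂ : ZMod h,
      (∑ i ∈ fib τ₁, ((d i : ℝ))⁻¹) = ∑ i ∈ fib τ₂, ((d i : ℝ))⁻¹ := by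
    intro τ₁ τ₂
    have h1 := (hW τ₁).trans (hW τ₂).symm
    have hh0' : (h : ℂ) ≠ 0 := Nat.cast_ne_zero.mpr hh0
    have h2 := mul_left_cancel₀ hh0' h1
    have hcast : ∀ τ : ZMod h, (∑ i ∈ fib τ, ((d i : ℂ))⁻¹)
        = ((∑ i ∈ fib τ, ((d i : ℝ))⁻¹ : ℝ) : ℂ) := by
      intro τ
      push_cast
      rfl
    rw [hcast, hcast] at h2
    exact_mod_cast h2
  have hfib_pos : ∀ τ : ZMod h, (fib τ).Nonempty := by
    intro τ
    by_contra hemp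
    rw [Finset.not_nonempty_iff_eq_empty] at hemp
    obtain ⟨i₀, hi₀R⟩ := hRne
    have h1 := hWr ((t i₀ : ZMod h)) τ
    rw [hemp, Finset.sum_empty] at h1
    have hmem : i₀ ∈ fib ((t i₀ : ZMod h)) := Finset.mem_filter.mpr ⟨hi₀R, rfl⟩
    have hdpos : (0 : ℝ) < ((d i₀ : ℝ))⁻¹ := by
      have := hd i₀
      have h2 : (0:ℝ) < (d i₀ : ℝ) := by exact_mod_cast Nat.lt_of_lt_of_le Nat.zero_lt_one this.le
      exact inv_pos.mpr h2
    have hpos : (0 : ℝ) < ∑ i ∈ fib ((t i₀ : ZMod h)), ((d i : ℝ))⁻¹ := by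
      refine Finset.sum_pos' (fun i _ => by positivity) ⟨i₀, hmem, hdpos⟩
    rw [h1] at hpos
    exact lt_irrefl _ hpos
  -- fiber cardinalities
  have hcard : ∑ τ : ZMod h, (fib τ).card = r := by
    rw [← hRcard, hfib]
    exact (Finset.card_eq_sum_card_fiberwise
      (f := fun i => ((t i : ZMod h))) (t := Finset.univ) (fun i _ => Finset.mem_univ _)).symm
  have hZcard : Fintype.card (ZMod h) = h := ZMod.card h
  set T1 : Finset (ZMod h) := Finset.univ.filter (fun τ => (fib τ).card = 1) with hT1
  have hT1card : 2 ≤ T1.card := by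
    by_contra hT
    push_neg at hT
    have hge : ∀ τ : ZMod h, τ ∉ T1 → 2 ≤ (fib τ).card := by
      intro τ hτ
      have h1 : (fib τ).card ≠ 1 := by
        intro hcc
        exact hτ (Finset.mem_filter.mpr ⟨Finset.mem_univ _, hcc⟩)
      have h2 : (fib τ).card ≠ 0 := by
        intro hcc
        exact absurd (Finset.card_eq_zero.mp hcc)
          (Finset.nonempty_iff_ne_empty.mp (hfib_pos τ))
      omega
    have hsplit : ∑ τ ∈ T1, (fib τ).card + ∑ τ ∈ T1ᶜ, (fib τ).card
        = ∑ τ : ZMod h, (fib τ).card := Finset.sum_add_sum_compl T1 _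
    have hb1 : ∑ τ ∈ T1, (fib τ).card = T1.card := by
      rw [Finset.sum_congr rfl (fun τ hτ => (Finset.mem_filter.mp hτ).2), Finset.sum_const,
        smul_eq_mul, mul_one]
    have hb2 : 2 * (T1ᶜ).card ≤ ∑ τ ∈ T1ᶜ, (fib τ).card := by
      calc 2 * (T1ᶜ).card = ∑ _τ ∈ T1ᶜ, 2 := by rw [Finset.sum_const, smul_eq_mul, mul_comm]
        _ ≤ ∑ τ ∈ T1ᶜ, (fib τ).card :=
            Finset.sum_le_sum (fun τ hτ => hge τ (Finset.mem_compl.mp hτ))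
    have hcompl : (T1ᶜ).card = h - T1.card := by
      rw [Finset.card_compl, hZcard]
    have hT1le : T1.card ≤ h := by
      have h1 := Finset.card_le_univ T1
      have h2 : (Finset.univ : Finset (ZMod h)).card = h := by
        rw [Finset.card_univ, hZcard]
      omega
    rw [hcompl] at hb2
    omega
  obtain ⟨τ₁, hτ₁, τ₂, hτ₂, hτne⟩ := Finset.one_lt_card.mp (by omega : 1 < T1.card)
  obtain ⟨i₁, hi₁⟩ := Finset.card_eq_one.mp (Finset.mem_filter.mp hτ₁).2
  obtain ⟨i₂, hi₂⟩ := Finset.card_eq_one.mp (Finset.mem_filter.mp hτ₂).2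
  have m1 : i₁ ∈ fib τ₁ := hi₁ ▸ Finset.mem_singleton_self i₁
  have m2 : i₂ ∈ fib τ₂ := hi₂ ▸ Finset.mem_singleton_self i₂
  refine ⟨i₁, i₂, ?_, ?_⟩
  · intro hcon
    have e1 : ((t i₁ : ZMod h)) = τ₁ := (Finset.mem_filter.mp m1).2
    have e2 : ((t i₂ : ZMod h)) = τ₂ := (Finset.mem_filter.mp m2).2
    apply hτne
    rw [← e1, ← e2, hcon]
  · have hs := hWr τ₁ τ₂
    rw [hi₁, hi₂, Finset.sum_singleton, Finset.sum_singleton] at hs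
    have : ((d i₁ : ℝ)) = ((d i₂ : ℝ)) := inv_inj.mp hs
    exact_mod_cast this
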